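/- Let q ∈ (0,1). Then the supremum, over all probability distributions of a positive-integer-valued random variable V with finite mean and finite entropy, of H(V)/(E[V] + (1−q)/q) equals the supremum over p ∈ (0,1] of q·H_b(p)/(q + p(1−q)), where H(V) is the Shannon entropy of V and H_b is the binary entropy function. -/

import Mathlib

open Real

noncomputable def Hb (x : ℝ) : ℝ := -(x * Real.log x) - (1 - x) * Real.log (1 - x)

lemma Hb_eq_binEntropy (x : ℝ) : Hb x = Real.binEntropy x := by
  rw [Real.binEntropy, Real.log_inv, Real.log_inv, Hb]; ring

noncomputable def geomF (p : ℝ) : ℕ+ → ℝ := fun k => p * (1 - p) ^ ((k : ℕ) - 1)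

lemma geomF_comp (p : ℝ) (n : ℕ) : geomF p (Equiv.pnatEquivNat.symm n) = p * (1 - p) ^ n := by
  simp [geomF, Equiv.pnatEquivNat, Nat.succPNat]

lemma geomF_nonneg {p : ℝ} (hp : 0 < p) (hp1 : p ≤ 1) (k : ℕ+) : 0 ≤ geomF p k :=
  mul_nonneg hp.le (pow_nonneg (by linarith) _)

lemma geomF_pos {p : ℝ} (hp : 0 < p) (hp1 : p < 1) (k : ℕ+) : 0 < geomF p k :=
  mul_pos hp (pow_pos (by linarith) _)

lemma geomF_hasSum {p : ℝ} (hp : 0 < p) (hp1 : p ≤ 1) : HasSum (geomF p) 1 := by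
  rw [← Equiv.pnatEquivNat.symm.hasSum_iff]
  have h : HasSum (fun n : ℕ => p * (1 - p) ^ n) (p * (1 - (1-p))⁻¹) :=
    (hasSum_geometric_of_lt_one (by linarith) (by linarith)).mul_left p
  have e1 : p * (1 - (1-p))⁻¹ = 1 := by
    rw [show (1 : ℝ) - (1-p) = p by ring, mul_inv_cancel₀ hp.ne']
  rw [e1] at h
  have hfe : (geomF p ∘ ⇑Equiv.pnatEquivNat.symm) = fun n : ℕ => p * (1-p) ^ n :=
    funext fun n => geomF_comp p n
  rw [hfe]; exact h

lemma coe_pnatEquivNat_symm (n : ℕ) : ((Equiv.pnatEquivNat.symm n : ℕ+) : ℝ) = (n : ℝ) + 1 := by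
  simp [Equiv.pnatEquivNat, Nat.succPNat]

lemma geomF_mean {p : ℝ} (hp : 0 < p) (hp1 : p ≤ 1) :
    HasSum (fun k : ℕ+ => (k : ℝ) * geomF p k) (1 / p) := by
  rw [← Equiv.pnatEquivNat.symm.hasSum_iff]
  set r := 1 - p with hr
  have hr0 : 0 ≤ r := by rw [hr]; linarith
  have hr1 : r < 1 := by rw [hr]; linarith
  have h1 : HasSum (fun n : ℕ => (n:ℝ) * r ^ n) (r / (1-r)^2) :=
    hasSum_coe_mul_geometric_of_norm_lt_one (by rw [Real.norm_eq_abs, abs_of_nonneg hr0]; exact hr1)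
  have h2 : HasSum (fun n : ℕ => r ^ n) (1-r)⁻¹ := hasSum_geometric_of_lt_one hr0 hr1
  have h3 := (h1.add h2).mul_left p
  have hrp : 1 - r = p := by rw [hr]; ring
  have e1 : p * (r / (1-r)^2 + (1-r)⁻¹) = 1 / p := by
    rw [hrp, hr]; field_simp
    try (left; ring)
    ring
  rw [e1] at h3
  have hfe : ((fun k : ℕ+ => (k:ℝ) * geomF p k) ∘ ⇑Equiv.pnatEquivNat.symm)
      = fun n : ℕ => p * ((n:ℝ) * r ^ n + r ^ n) := by
    funext n
    show ((Equiv.pnatEquivNat.symm n : ℕ+) : ℝ) * geomF p (Equiv.pnatEquivNat.symm n) = _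
    rw [geomF_comp p n, coe_pnatEquivNat_symm, ← hr]; ring
  rw [hfe]; exact h3

lemma geomF_entropy {p : ℝ} (hp : 0 < p) (hp1 : p ≤ 1) :
    HasSum (fun k : ℕ+ => Real.negMulLog (geomF p k)) (Hb p / p) := by
  rcases eq_or_lt_of_le hp1 with h1 | h1
  · -- p = 1
    subst h1
    have hf : (fun k : ℕ+ => Real.negMulLog (geomF 1 k)) = fun _ => (0:ℝ) := by
      funext k
      rcases eq_or_lt_of_le k.one_le with hk | hk
      · simp [geomF, ← hk]
      · have h2 : 1 < (k:ℕ) := by exact_mod_cast hk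
        have : geomF 1 k = 0 := by
          simp [geomF, zero_pow (by omega : (k:ℕ) - 1 ≠ 0)]
        simp [this]
    rw [hf]
    have : Hb 1 / 1 = 0 := by simp [Hb]
    rw [this]
    exact hasSum_zero
  · -- p < 1
    set r := 1 - p with hr
    have hr0 : 0 < r := by rw [hr]; linarith
    have hr1 : r < 1 := by rw [hr]; linarith
    rw [← Equiv.pnatEquivNat.symm.hasSum_iff]
    have hA : HasSum (fun n : ℕ => p * r ^ n) (p * (1-r)⁻¹) :=
      (hasSum_geometric_of_lt_one hr0.le hr1).mul_left p
    have hB : HasSum (fun n : ℕ => (n:ℝ) * r ^ n) (r / (1-r)^2) :=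
      hasSum_coe_mul_geometric_of_norm_lt_one
        (by rw [Real.norm_eq_abs, abs_of_nonneg hr0.le]; exact hr1)
    have h := (hA.mul_left (-Real.log p)).add ((hB.mul_left p).mul_left (-Real.log r))
    have hfe : ((fun k : ℕ+ => Real.negMulLog (geomF p k)) ∘ ⇑Equiv.pnatEquivNat.symm)
        = fun n : ℕ => -Real.log p * (p * r ^ n) + -Real.log r * (p * ((n:ℝ) * r ^ n)) := by
      funext n
      show Real.negMulLog (geomF p (Equiv.pnatEquivNat.symm n)) = _
      rw [geomF_comp p n, ← hr, Real.negMulLog,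
        Real.log_mul hp.ne' (pow_ne_zero n hr0.ne'), Real.log_pow]
      ring
    rw [hfe]
    have hval : -Real.log p * (p * (1-r)⁻¹) + -Real.log r * (p * (r / (1-r)^2)) = Hb p / p := by
      have hrp : 1 - r = p := by rw [hr]; ring
      rw [hrp, Hb, ← hr]
      field_simp
      ring
    rw [← hval]
    exact h

lemma key_ineq (f : ℕ+ → ℝ) (hf0 : ∀ k, 0 ≤ f k) (hf1 : HasSum f 1)
    (hmean : Summable fun k : ℕ+ => (k:ℝ) * f k)
    (hent : Summable fun k : ℕ+ => Real.negMulLog (f k)) :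
    (∑' k : ℕ+, Real.negMulLog (f k)) ≤
      Hb (1 / ∑' k : ℕ+, (k:ℝ) * f k) / (1 / ∑' k : ℕ+, (k:ℝ) * f k) := by
  set μ := ∑' k : ℕ+, (k:ℝ) * f k with hμdef
  have hμ : HasSum (fun k : ℕ+ => (k:ℝ) * f k) μ := hmean.hasSum
  have hμ1 : 1 ≤ μ := by
    have := Summable.tsum_le_tsum (fun k : ℕ+ =>
      le_mul_of_one_le_left (hf0 k) (by exact_mod_cast k.one_le)) hf1.summable hmean
    rwa [hf1.tsum_eq] at this
  have hS1 : HasSum (fun k : ℕ+ => ((k:ℝ) - 1) * f k) (μ - 1) := by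
    have h := hμ.sub hf1
    have : (fun k : ℕ+ => (k:ℝ) * f k - f k) = fun k : ℕ+ => ((k:ℝ) - 1) * f k := by
      funext k; ring
    rwa [this] at h
  rcases eq_or_lt_of_le hμ1 with heq | hlt
  · -- μ = 1 : f is concentrated at 1
    have hS0 : HasSum (fun k : ℕ+ => ((k:ℝ) - 1) * f k) 0 := by rw [← heq] at hS1; simpa using hS1
    have hz := (hasSum_zero_iff_of_nonneg (fun k : ℕ+ =>
      mul_nonneg (by
        have : (1:ℝ) ≤ (k:ℝ) := by exact_mod_cast k.one_le
        linarith) (hf0 k))).mp hS0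
    have hfz : ∀ k : ℕ+, k ≠ 1 → f k = 0 := by
      intro k hk
      have hk1 : (1:ℝ) < (k:ℝ) := by
        have : 1 < k := lt_of_le_of_ne k.one_le (Ne.symm hk)
        exact_mod_cast this
      have := congrFun hz k
      simp only [Pi.zero_apply] at this
      rcases mul_eq_zero.mp this with h | h
      · linarith
      · exact h
    have hf1' : f 1 = 1 := (hasSum_single (1 : ℕ+) hfz).unique hf1
    have hnz : (fun k : ℕ+ => Real.negMulLog (f k)) = fun _ => (0:ℝ) := by
      funext k
      by_cases hk : k = 1
      · simp [hk, hf1']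
      · simp [hfz k hk]
    rw [hnz, tsum_zero, ← heq]
    simp [Hb]
  · -- μ > 1
    have hμ0 : 0 < μ := by linarith
    set p := 1 / μ with hpdef
    have hp : 0 < p := by positivity
    have hp1 : p < 1 := by rw [hpdef]; rw [div_lt_one hμ0]; linarith
    set r := 1 - p with hrdef
    have hr0 : 0 < r := by rw [hrdef]; linarith
    have hr1 : r < 1 := by rw [hrdef]; linarith
    have hg := geomF_hasSum hp hp1.le
    have hlogg : ∀ k : ℕ+, Real.log (geomF p k) = Real.log p + ((k:ℝ) - 1) * Real.log r := by
      intro k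
      rw [geomF, ← hrdef, Real.log_mul hp.ne' (pow_ne_zero _ hr0.ne'), Real.log_pow]
      congr 2
      have hk1 : (1:ℕ) ≤ (k:ℕ) := k.one_le
      rw [Nat.cast_sub hk1]
      push_cast
      ring
    have hlogsum : HasSum (fun k : ℕ+ => f k * Real.log (geomF p k))
        (Real.log p * 1 + Real.log r * (μ - 1)) := by
      have h := (hf1.mul_left (Real.log p)).add (hS1.mul_left (Real.log r))
      have he : (fun k : ℕ+ => Real.log p * f k + Real.log r * (((k:ℝ) - 1) * f k))
          = fun k : ℕ+ => f k * Real.log (geomF p k) := by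
        funext k; rw [hlogg k]; ring
      rwa [he] at h
    have hpt : ∀ k : ℕ+, Real.negMulLog (f k) + f k * Real.log (geomF p k)
        ≤ geomF p k - f k := by
      intro k
      rcases (hf0 k).eq_or_lt with h | h
      · rw [← h]
        simp [Real.negMulLog]
        exact geomF_nonneg hp hp1.le k
      · have hgk : 0 < geomF p k := geomF_pos hp hp1 k
        have h1 : Real.negMulLog (f k) + f k * Real.log (geomF p k)
            = f k * Real.log (geomF p k / f k) := by
          rw [Real.log_div hgk.ne' h.ne', Real.negMulLog]; ring
        rw [h1]
        have h2 : Real.log (geomF p k / f k) ≤ geomF p k / f k - 1 :=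
          Real.log_le_sub_one_of_pos (div_pos hgk h)
        calc f k * Real.log (geomF p k / f k) ≤ f k * (geomF p k / f k - 1) :=
              mul_le_mul_of_nonneg_left h2 h.le
          _ = geomF p k - f k := by rw [mul_sub, mul_div_cancel₀ _ h.ne']; ring
    have hle := Summable.tsum_le_tsum hpt (hent.add hlogsum.summable) (hg.sub hf1).summable
    rw [Summable.tsum_add hent hlogsum.summable, hlogsum.tsum_eq, (hg.sub hf1).tsum_eq] at hle
    have hH : (∑' k : ℕ+, Real.negMulLog (f k))
        ≤ -(Real.log p) - Real.log r * (μ - 1) := by linarith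
    refine hH.trans (le_of_eq ?_)
    have hrp : r = p * (μ - 1) := by
      rw [hrdef, hpdef]; field_simp
    rw [Hb, ← hrdef, hrp]
    field_simp [hp.ne']

lemma Hb_nonneg' {p : ℝ} (hp : 0 ≤ p) (hp1 : p ≤ 1) : 0 ≤ Hb p := by
  rw [Hb_eq_binEntropy]; exact Real.binEntropy_nonneg hp hp1

lemma Hb_le_log_two (p : ℝ) : Hb p ≤ Real.log 2 := by
  rw [Hb_eq_binEntropy]; exact Real.binEntropy_le_log_two

lemma ratio_eq {q p : ℝ} (hq : q ∈ Set.Ioo (0:ℝ) 1) (hp : 0 < p) (hp1 : p ≤ 1) :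
    (Hb p / p) / (1/p + (1-q)/q) = q * Hb p / (q + p * (1-q)) := by
  obtain ⟨hq0, hq1⟩ := hq
  have hD1 : 0 < 1/p + (1-q)/q := by
    have h1 : 0 < 1/p := by positivity
    have h2 : 0 ≤ (1-q)/q := div_nonneg (by linarith) hq0.le
    linarith
  have hD2 : 0 < q + p * (1-q) := by nlinarith
  rw [div_eq_div_iff hD1.ne' hD2.ne']
  field_simp

lemma mean_ge_one (f : ℕ+ → ℝ) (hf0 : ∀ k, 0 ≤ f k) (hf1 : HasSum f 1)
    (hmean : Summable fun k : ℕ+ => (k:ℝ) * f k) : 1 ≤ ∑' k : ℕ+, (k:ℝ) * f k := by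
  have := Summable.tsum_le_tsum (fun k : ℕ+ =>
    le_mul_of_one_le_left (hf0 k) (by exact_mod_cast k.one_le)) hf1.summable hmean
  rwa [hf1.tsum_eq] at this

/-- For `q ∈ (0,1)`, the supremum of `H(V)/(E[V] + (1−q)/q)` over
all distributions `f` of a positive-integer-valued random variable `V` with
finite mean and finite entropy equals `sup_{p ∈ (0,1]} q·Hb(p)/(q + p(1−q))`. -/
theorem stmt8 (q : ℝ) (hq : q ∈ Set.Ioo (0 : ℝ) 1) :
    sSup {r : ℝ | ∃ f : ℕ+ → ℝ, (∀ k, 0 ≤ f k) ∧ HasSum f 1 ∧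
        Summable (fun k : ℕ+ => (k : ℝ) * f k) ∧
        Summable (fun k : ℕ+ => Real.negMulLog (f k)) ∧
        r = (∑' k : ℕ+, Real.negMulLog (f k)) /
              ((∑' k : ℕ+, (k : ℝ) * f k) + (1 - q) / q)} =
      sSup {r : ℝ | ∃ p : ℝ, 0 < p ∧ p ≤ 1 ∧ r = q * Hb p / (q + p * (1 - q))} := by
  obtain ⟨hq0, hq1⟩ := hq
  set A := {r : ℝ | ∃ f : ℕ+ → ℝ, (∀ k, 0 ≤ f k) ∧ HasSum f 1 ∧
        Summable (fun k : ℕ+ => (k : ℝ) * f k) ∧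
        Summable (fun k : ℕ+ => Real.negMulLog (f k)) ∧
        r = (∑' k : ℕ+, Real.negMulLog (f k)) /
              ((∑' k : ℕ+, (k : ℝ) * f k) + (1 - q) / q)} with hA
  set B := {r : ℝ | ∃ p : ℝ, 0 < p ∧ p ≤ 1 ∧ r = q * Hb p / (q + p * (1 - q))} with hB
  have hBA : B ⊆ A := by
    rintro r ⟨p, hp, hp1, hr⟩
    refine ⟨geomF p, geomF_nonneg hp hp1, geomF_hasSum hp hp1,
      (geomF_mean hp hp1).summable, (geomF_entropy hp hp1).summable, ?_⟩
    rw [(geomF_entropy hp hp1).tsum_eq, (geomF_mean hp hp1).tsum_eq,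
      ratio_eq ⟨hq0, hq1⟩ hp hp1]
    exact hr
  have hA_le : ∀ r ∈ A, ∃ b ∈ B, r ≤ b := by
    rintro r ⟨f, hf0, hf1, hmean, hent, hr⟩
    set μ := ∑' k : ℕ+, (k:ℝ) * f k with hμdef
    have hμ1 : 1 ≤ μ := mean_ge_one f hf0 hf1 hmean
    have hμ0 : 0 < μ := by linarith
    set p := 1 / μ with hpdef
    have hp : 0 < p := by positivity
    have hp1 : p ≤ 1 := by rw [hpdef, div_le_one hμ0]; linarith
    refine ⟨q * Hb p / (q + p * (1-q)), ⟨p, hp, hp1, rfl⟩, ?_⟩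
    have hkey := key_ineq f hf0 hf1 hmean hent
    have hden : 0 < μ + (1-q)/q := by
      have h2 : 0 ≤ (1-q)/q := div_nonneg (by linarith) hq0.le
      linarith
    have h1 : r ≤ (Hb p / p) / (μ + (1-q)/q) := by
      rw [hr]
      gcongr
    have h2 : (Hb p / p) / (μ + (1-q)/q) = q * Hb p / (q + p * (1-q)) := by
      have : μ = 1 / p := by rw [hpdef, one_div_one_div]
      rw [this, ratio_eq ⟨hq0, hq1⟩ hp hp1]
    rw [← h2]
    exact h1
  have hBle : ∀ r ∈ B, r ≤ Real.log 2 := by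
    rintro r ⟨p, hp, hp1, hr⟩
    have h0 : 0 ≤ q * Hb p := mul_nonneg hq0.le (Hb_nonneg' hp.le hp1)
    have h1 : q * Hb p / (q + p * (1-q)) ≤ q * Hb p / q := by
      refine div_le_div_of_nonneg_left h0 hq0 ?_
      nlinarith
    have h2 : q * Hb p / q = Hb p := by
      rw [mul_comm, mul_div_assoc, div_self hq0.ne', mul_one]
    rw [hr]
    exact h1.trans (h2.le.trans (Hb_le_log_two p))
  have hBddB : BddAbove B := ⟨Real.log 2, hBle⟩
  have hBddA : BddAbove A := by
    refine ⟨Real.log 2, fun r hr => ?_⟩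
    obtain ⟨b, hbB, hrb⟩ := hA_le r hr
    exact hrb.trans (hBle b hbB)
  have hBne : B.Nonempty := ⟨q * Hb 1 / (q + 1 * (1 - q)), 1, one_pos, le_refl 1, rfl⟩
  have hAne : A.Nonempty := ⟨_, hBA hBne.some_mem⟩
  apply le_antisymm
  · refine csSup_le hAne fun r hr => ?_
    obtain ⟨b, hbB, hrb⟩ := hA_le r hr
    exact hrb.trans (le_csSup hBddB hbB)
  · exact csSup_le hBne fun r hr => le_csSup hBddA (hBA hr)
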